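/- Let p be an odd prime, q = p^r, and write i = i_0 p^{n(i)} with p ∤ i_0. Let u = t + u_{qi+1}t^{qi+1}, v = t + v_{qj+1}t^{qj+1} + … in T(q) with u_{qi+1} v_{qj+1} ≠ 0, and suppose i > j·(q p^{n(i)} - 1)/(q - 1). Then [u,v] = t + i_0 u_{qi+1} v_{qj+1} t^{1 + q(q p^{n(i)} j + i)} + (higher order terms). -/

import Mathlib

/-- Composition (substitution) of formal power series: `psComp f g = f(g(t))`. -/
noncomputable def psComp {R : Type*} [CommRing R] (f g : PowerSeries R) : PowerSeries R :=
  PowerSeries.mk fun n =>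
    ∑ k ∈ Finset.range (n + 1), PowerSeries.coeff k f * PowerSeries.coeff n (g ^ k)

namespace FesAux
open PowerSeries Finset

variable {R : Type*} [CommRing R]

lemma coeff_psComp (f g : PowerSeries R) (n : ℕ) :
    coeff n (psComp f g) = ∑ k ∈ range (n + 1), coeff k f * coeff n (g ^ k) := by
  simp [psComp, coeff_mk]

lemma coeff_pow_eq_zero {f : PowerSeries R} {d : ℕ} (h : ∀ m, m < d → coeff m f = 0) :
    ∀ {k n : ℕ}, n < k * d → coeff n (f ^ k) = 0 := by
  intro k
  induction k with
  | zero => intro n hn; simp at hn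
  | succ k ih =>
    intro n hn
    rw [pow_succ, coeff_mul]
    apply Finset.sum_eq_zero
    rintro ⟨x, y⟩ hxy
    rw [Finset.HasAntidiagonal.mem_antidiagonal] at hxy
    by_cases hx : x < k * d
    · rw [ih hx, zero_mul]
    · have : y < d := by
        have : (k+1) * d = k * d + d := by ring
        omega
      rw [h y this, mul_zero]

lemma coeff_pow_ord1 {f : PowerSeries R} (h : constantCoeff f = 0) {k n : ℕ}
    (hn : n < k) : coeff n (f ^ k) = 0 := by
  have h' : ∀ m, m < 1 → coeff m f = 0 := by
    intro m hm
    interval_cases m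
    · simpa [coeff_zero_eq_constantCoeff] using h
  exact coeff_pow_eq_zero h' (by omega)

lemma coeff_pow_lead {f : PowerSeries R} {d : ℕ} (h : ∀ m, m < d → coeff m f = 0) (k : ℕ) :
    coeff (k * d) (f ^ k) = (coeff d f) ^ k := by
  induction k with
  | zero => simp
  | succ k ih =>
    rw [pow_succ, coeff_mul]
    rw [Finset.sum_eq_single (k * d, d)]
    · rw [ih, pow_succ]
    · rintro ⟨x, y⟩ hxy hne
      rw [Finset.HasAntidiagonal.mem_antidiagonal] at hxy
      by_cases hx : x < k * d
      · rw [coeff_pow_eq_zero h hx, zero_mul]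
      · have hyd : y < d ∨ (x = k * d ∧ y = d) := by
          have : (k+1) * d = k * d + d := by ring
          omega
        rcases hyd with hyd | ⟨hx', hy'⟩
        · rw [h y hyd, mul_zero]
        · exact absurd (by rw [hx', hy']) hne
    · intro hmem
      exfalso
      apply hmem
      rw [Finset.HasAntidiagonal.mem_antidiagonal]
      ring

end FesAux

namespace FesAux
open PowerSeries Finset

variable {R : Type*} [CommRing R]

lemma triangle_to_square {M : Type*} [AddCommMonoid M] (n : ℕ) (F : ℕ × ℕ → M)
    (hF : ∀ cd : ℕ × ℕ, n < cd.1 + cd.2 → F cd = 0) :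
    ∑ k ∈ range (n+1), ∑ cd ∈ antidiagonal k, F cd
      = ∑ cd ∈ (range (n+1)) ×ˢ (range (n+1)), F cd := by
  have step2 : ∀ k ∈ range (n+1), (antidiagonal k : Finset (ℕ × ℕ))
      = ((range (n+1)) ×ˢ (range (n+1))).filter (fun cd => cd.1 + cd.2 = k) := by
    intro k hk
    rw [Finset.mem_range] at hk
    ext ⟨c, d⟩
    simp only [Finset.HasAntidiagonal.mem_antidiagonal, Finset.mem_filter, Finset.mem_product, Finset.mem_range]
    omega
  calc ∑ k ∈ range (n+1), ∑ cd ∈ antidiagonal k, F cd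
      = ∑ k ∈ range (n+1), ∑ cd ∈ (range (n+1)) ×ˢ (range (n+1)),
          if cd.1 + cd.2 = k then F cd else 0 := by
        refine Finset.sum_congr rfl fun k hk => ?_
        rw [step2 k hk, Finset.sum_filter]
    _ = ∑ cd ∈ (range (n+1)) ×ˢ (range (n+1)), ∑ k ∈ range (n+1),
          if cd.1 + cd.2 = k then F cd else 0 := Finset.sum_comm
    _ = ∑ cd ∈ (range (n+1)) ×ˢ (range (n+1)), if cd.1 + cd.2 ∈ range (n+1) then F cd else 0 := by
        refine Finset.sum_congr rfl fun cd _ => Finset.sum_ite_eq _ _ _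
    _ = ∑ cd ∈ (range (n+1)) ×ˢ (range (n+1)), F cd := by
        refine Finset.sum_congr rfl fun cd _ => ?_
        split_ifs with hmem
        · rfl
        · rw [Finset.mem_range] at hmem
          exact (hF cd (by omega)).symm

lemma psComp_mul (f g h : PowerSeries R) (hh : constantCoeff h = 0) :
    psComp (f * g) h = psComp f h * psComp g h := by
  ext n
  rw [PowerSeries.coeff_mul, coeff_psComp]
  have hL : ∑ k ∈ range (n+1), coeff k (f * g) * coeff n (h ^ k)
      = ∑ cd ∈ (range (n+1)) ×ˢ (range (n+1)),
          coeff cd.1 f * coeff cd.2 g * coeff n (h ^ (cd.1 + cd.2)) := by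
    rw [← triangle_to_square n _ (fun cd hcd => by
      rw [coeff_pow_ord1 hh (by omega), mul_zero])]
    refine Finset.sum_congr rfl fun k _ => ?_
    rw [PowerSeries.coeff_mul, Finset.sum_mul]
    refine Finset.sum_congr rfl fun cd hcd => ?_
    rw [Finset.HasAntidiagonal.mem_antidiagonal] at hcd
    rw [hcd]
  rw [hL]
  have hR : ∀ xy : ℕ × ℕ, xy ∈ antidiagonal n →
      coeff xy.1 (psComp f h) * coeff xy.2 (psComp g h)
        = ∑ c ∈ range (n+1), ∑ d ∈ range (n+1),
            (coeff c f * coeff xy.1 (h ^ c)) * (coeff d g * coeff xy.2 (h ^ d)) := by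
    rintro ⟨x, y⟩ hxy
    rw [Finset.HasAntidiagonal.mem_antidiagonal] at hxy
    simp only
    rw [coeff_psComp, coeff_psComp]
    rw [Finset.sum_subset (Finset.range_subset_range.2 (by omega : x + 1 ≤ n + 1))
      (fun c _ hc => by
        rw [Finset.mem_range] at hc
        rw [coeff_pow_ord1 hh (by omega), mul_zero])]
    rw [Finset.sum_subset (Finset.range_subset_range.2 (by omega : y + 1 ≤ n + 1))
      (fun d _ hd => by
        rw [Finset.mem_range] at hd
        rw [coeff_pow_ord1 hh (by omega), mul_zero])]
    rw [Finset.sum_mul_sum]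
  rw [Finset.sum_congr rfl hR, Finset.sum_product]
  conv_rhs => rw [Finset.sum_comm]
  refine Finset.sum_congr rfl fun c _ => ?_
  conv_rhs => rw [Finset.sum_comm]
  refine Finset.sum_congr rfl fun d _ => ?_
  rw [pow_add, PowerSeries.coeff_mul, Finset.mul_sum]
  refine Finset.sum_congr rfl fun xy _ => ?_
  ring

end FesAux

namespace FesAux
open PowerSeries Finset

variable {R : Type*} [CommRing R]

lemma psComp_one (h : PowerSeries R) : psComp 1 h = 1 := by
  ext n
  rw [coeff_psComp]
  simp only [PowerSeries.coeff_one]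
  rw [Finset.sum_congr rfl (fun k (_ : k ∈ range (n+1)) => by
    rw [ite_mul, one_mul, zero_mul] :
    ∀ k ∈ range (n+1), (if k = 0 then (1:R) else 0) * coeff n (h ^ k)
      = if k = 0 then coeff n (h ^ k) else 0)]
  rw [Finset.sum_ite_eq' (range (n+1)) 0 (fun k => coeff n (h ^ k))]
  simp

lemma psComp_pow (g h : PowerSeries R) (hh : constantCoeff h = 0) (l : ℕ) :
    psComp (g ^ l) h = (psComp g h) ^ l := by
  induction l with
  | zero => simpa using psComp_one h
  | succ l ih => rw [pow_succ, psComp_mul _ _ _ hh, ih, pow_succ]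

lemma constantCoeff_psComp (f g : PowerSeries R) :
    constantCoeff (psComp f g) = constantCoeff f := by
  have h0 := coeff_psComp f g 0
  simp only [zero_add, range_one, Finset.sum_singleton, pow_zero] at h0
  simp only [coeff_zero_eq_constantCoeff] at h0
  simpa using h0

lemma psComp_X_left (h : PowerSeries R) (hh : constantCoeff h = 0) :
    psComp X h = h := by
  ext n
  rw [coeff_psComp]
  simp only [PowerSeries.coeff_X]
  rw [Finset.sum_congr rfl (fun k (_ : k ∈ range (n+1)) => by
    rw [ite_mul, one_mul, zero_mul] :
    ∀ k ∈ range (n+1), (if k = 1 then (1:R) else 0) * coeff n (h ^ k)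
      = if k = 1 then coeff n (h ^ k) else 0)]
  rw [Finset.sum_ite_eq' (range (n+1)) 1 (fun k => coeff n (h ^ k))]
  rcases Nat.eq_zero_or_pos n with hn | hn
  · subst hn
    simp [coeff_zero_eq_constantCoeff, hh]
  · rw [if_pos (Finset.mem_range.2 (by omega)), pow_one]

lemma psComp_X_right (f : PowerSeries R) : psComp f X = f := by
  ext n
  rw [coeff_psComp]
  rw [Finset.sum_congr rfl (fun k (_ : k ∈ range (n+1)) => by
    rw [PowerSeries.coeff_X_pow, mul_ite, mul_one, mul_zero] :
    ∀ k ∈ range (n+1), coeff k f * coeff n ((X : PowerSeries R) ^ k)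
      = if n = k then coeff k f else 0)]
  rw [Finset.sum_ite_eq (range (n+1)) n (fun k => coeff k f)]
  rw [if_pos (Finset.mem_range.2 (by omega))]

lemma psComp_assoc (f g h : PowerSeries R) (hg : constantCoeff g = 0)
    (hh : constantCoeff h = 0) :
    psComp (psComp f g) h = psComp f (psComp g h) := by
  ext n
  rw [coeff_psComp, coeff_psComp]
  have hL : ∀ k ∈ range (n+1), coeff k (psComp f g) * coeff n (h ^ k)
      = ∑ l ∈ range (n+1), coeff l f * coeff k (g ^ l) * coeff n (h ^ k) := by
    intro k hk
    rw [Finset.mem_range] at hk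
    rw [coeff_psComp, Finset.sum_mul]
    rw [Finset.sum_subset (Finset.range_subset_range.2 (by omega : k + 1 ≤ n + 1))
      (fun l _ hl => by
        rw [Finset.mem_range] at hl
        rw [coeff_pow_ord1 hg (by omega), mul_zero, zero_mul])]
  have hRt : ∀ l ∈ range (n+1), coeff l f * coeff n ((psComp g h) ^ l)
      = ∑ k ∈ range (n+1), coeff l f * coeff k (g ^ l) * coeff n (h ^ k) := by
    intro l _
    rw [← psComp_pow g h hh, coeff_psComp, Finset.mul_sum]
    refine Finset.sum_congr rfl fun k _ => ?_
    ring
  rw [Finset.sum_congr rfl hL, Finset.sum_congr rfl hRt, Finset.sum_comm]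

end FesAux

namespace FesAux
open PowerSeries Finset

variable {R : Type*} [CommRing R]

lemma coeff_pow_nearX {f : PowerSeries R} {n : ℕ} (hn : 2 ≤ n)
    (h0 : constantCoeff f = 0)
    (hmid : ∀ m, 0 < m → m < n → coeff m f = if m = 1 then 1 else 0) :
    ∀ k : ℕ, ∀ m ≤ n, coeff m (f ^ k) =
      if m < n then (if m = k then (1:R) else 0)
      else (if k = n then 1 else 0) + (if k = 1 then coeff n f else 0) := by
  have hf : ∀ y ≤ n, coeff y f
      = (if y = 1 then (1:R) else 0) + (if y = n then coeff n f else 0) := by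
    intro y hy
    rcases Nat.eq_zero_or_pos y with rfl | hy0
    · rw [coeff_zero_eq_constantCoeff, h0,
        if_neg (show ¬ (0:ℕ) = 1 by omega), if_neg (show ¬ (0:ℕ) = n by omega), add_zero]
    rcases Nat.lt_or_ge y n with hyn | hyn
    · rw [hmid y hy0 hyn, if_neg (show ¬ y = n by omega), add_zero]
    · have : y = n := by omega
      subst this
      rw [if_neg (show ¬ y = 1 by omega), if_pos rfl, zero_add]
  intro k
  induction k with
  | zero =>
    intro m hm
    rw [pow_zero, PowerSeries.coeff_one]
    rcases Nat.lt_or_ge m n with h | h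
    · rw [if_pos h]
    · have : m = n := by omega
      subst this
      rw [if_neg (lt_irrefl m), if_neg (show ¬ m = 0 by omega),
        if_neg (show ¬ (0:ℕ) = m by omega), if_neg (show ¬ (0:ℕ) = 1 by omega), add_zero]
  | succ k ih =>
    intro m hm
    rw [pow_succ, PowerSeries.coeff_mul]
    have hterm : ∀ xy : ℕ × ℕ, xy ∈ antidiagonal m →
        coeff xy.1 (f ^ k) * coeff xy.2 f
          = (if xy.2 = 1 then coeff xy.1 (f ^ k) else 0)
            + (if xy.2 = n then coeff xy.1 (f ^ k) * coeff n f else 0) := by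
      rintro ⟨x, y⟩ hxy
      rw [Finset.HasAntidiagonal.mem_antidiagonal] at hxy
      simp only
      rw [hf y (by omega), mul_add]
      congr 1
      · split_ifs <;> simp
      · split_ifs <;> simp
    rw [Finset.sum_congr rfl hterm, Finset.sum_add_distrib]
    have hS1 : ∑ xy ∈ antidiagonal m, (if xy.2 = 1 then coeff xy.1 (f ^ k) else 0)
        = if 1 ≤ m then (if m - 1 = k then (1:R) else 0) else 0 := by
      rcases Nat.lt_or_ge m 1 with hm1 | hm1
      · rw [if_neg (by omega)]
        apply Finset.sum_eq_zero
        rintro ⟨x, y⟩ hxy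
        rw [Finset.HasAntidiagonal.mem_antidiagonal] at hxy
        rw [if_neg (show ¬ y = 1 by omega)]
      · rw [if_pos hm1]
        rw [Finset.sum_eq_single (m - 1, 1)]
        · simp only [if_pos rfl]
          rw [ih (m-1) (by omega), if_pos (show m - 1 < n by omega), if_pos trivial]
        · rintro ⟨x, y⟩ hxy hne
          rw [Finset.HasAntidiagonal.mem_antidiagonal] at hxy
          have : ¬ y = 1 := by
            intro hy1
            apply hne
            simp only [Prod.mk.injEq]
            omega
          rw [if_neg this]
        · intro habs
          exfalso
          apply habs
          rw [Finset.HasAntidiagonal.mem_antidiagonal]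
          omega
    have hS2 : ∑ xy ∈ antidiagonal m, (if xy.2 = n then coeff xy.1 (f ^ k) * coeff n f else 0)
        = if m = n then (if k = 0 then (1:R) else 0) * coeff n f else 0 := by
      rcases Nat.lt_or_ge m n with hmn | hmn
      · rw [if_neg (show ¬ m = n by omega)]
        apply Finset.sum_eq_zero
        rintro ⟨x, y⟩ hxy
        rw [Finset.HasAntidiagonal.mem_antidiagonal] at hxy
        rw [if_neg (show ¬ y = n by omega)]
      · have hmn' : m = n := by omega
        rw [if_pos hmn']
        rw [Finset.sum_eq_single (0, n)]
        · rw [if_pos rfl]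
          congr 1
          rw [coeff_zero_eq_constantCoeff, map_pow, h0, zero_pow_eq]
        · rintro ⟨x, y⟩ hxy hne
          rw [Finset.HasAntidiagonal.mem_antidiagonal] at hxy
          have : ¬ y = n := by
            intro hy1
            apply hne
            simp only [Prod.mk.injEq]
            omega
          rw [if_neg this]
        · intro habs
          exfalso
          apply habs
          rw [Finset.HasAntidiagonal.mem_antidiagonal]
          omega
    rw [hS1, hS2]
    rcases Nat.lt_or_ge m n with hmn | hmn
    · rw [if_neg (show ¬ m = n by omega), add_zero, if_pos hmn]
      by_cases hmk : m = k + 1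
      · rw [if_pos (show 1 ≤ m by omega), if_pos (show m - 1 = k by omega), if_pos hmk]
      · rw [if_neg hmk]
        by_cases h1m : 1 ≤ m
        · rw [if_pos h1m, if_neg (show ¬ m - 1 = k by omega)]
        · rw [if_neg h1m]
    · have hmn' : m = n := by omega
      rw [if_pos hmn', if_neg (show ¬ m < n by omega), if_pos (show 1 ≤ m by omega)]
      have e1 : (if m - 1 = k then (1:R) else 0) = (if k + 1 = n then 1 else 0) := by
        split_ifs <;> first | rfl | omega
      have e2 : (if k = 0 then (1:R) else 0) * coeff n f
          = (if k + 1 = 1 then coeff n f else 0) := by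
        by_cases hk : k = 0
        · rw [if_pos hk, if_pos (by omega), one_mul]
        · rw [if_neg hk, if_neg (by omega), zero_mul]
      rw [e1, e2]

end FesAux

namespace FesAux
open Polynomial

lemma choose_cast_eq (p : ℕ) (hp : p.Prime) (e : ℕ) (c m : ℕ) (hP : 2 ≤ p ^ e) :
    (((1 + c * p ^ e).choose m : ℕ) : ZMod p) =
      (if p ^ e ∣ m then ((c.choose (m / p ^ e) : ℕ) : ZMod p) else 0) +
      (if 1 ≤ m ∧ p ^ e ∣ (m - 1) then ((c.choose ((m - 1) / p ^ e) : ℕ) : ZMod p) else 0) := by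
  haveI : Fact p.Prime := ⟨hp⟩
  set P := p ^ e with hPdef
  have hP0 : 0 < P := by omega
  -- key polynomial identity
  have key : ((X + 1 : Polynomial (ZMod p)) ^ (1 + c * P))
      = (X + 1) * expand (ZMod p) P ((X + 1) ^ c) := by
    have frob : ((X + 1 : Polynomial (ZMod p)) ^ P) = X ^ P + 1 := by
      rw [hPdef, add_pow_char_pow]
      simp
    rw [pow_add, pow_one, mul_comm c P, pow_mul, frob, map_pow, map_add,
      Polynomial.expand_X, map_one]
  have hcoeff := congrArg (fun f : Polynomial (ZMod p) => f.coeff m) key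
  rw [Polynomial.coeff_X_add_one_pow] at hcoeff
  rw [add_mul, one_mul] at hcoeff
  rw [Polynomial.coeff_add] at hcoeff
  rw [hcoeff]
  have hXmul : (X * expand (ZMod p) P ((X + 1) ^ c)).coeff m
      = if 1 ≤ m ∧ P ∣ (m - 1) then ((c.choose ((m - 1) / P) : ℕ) : ZMod p) else 0 := by
    rcases Nat.eq_zero_or_pos m with rfl | hm
    · rw [Polynomial.coeff_X_mul_zero, if_neg (by omega)]
    · obtain ⟨m', rfl⟩ : ∃ m', m = m' + 1 := ⟨m - 1, by omega⟩
      rw [Polynomial.coeff_X_mul, Polynomial.coeff_expand hP0,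
        Polynomial.coeff_X_add_one_pow]
      simp only [Nat.add_sub_cancel]
      by_cases hd : P ∣ m'
      · rw [if_pos hd, if_pos ⟨by omega, hd⟩]
      · rw [if_neg hd, if_neg (by rintro ⟨h1, h2⟩; exact hd h2)]
  have hexp : (expand (ZMod p) P ((X + 1) ^ c)).coeff m
      = if P ∣ m then ((c.choose (m / P) : ℕ) : ZMod p) else 0 := by
    rw [Polynomial.coeff_expand hP0, Polynomial.coeff_X_add_one_pow]
  rw [hXmul, hexp, add_comm]

end FesAux


/-- Membership in the Fesenko group `T(q)`: power series of the form
`t + Σ_{k≥1} a_{qk+1} t^{qk+1}` over `𝔽_p`. -/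
def InT (p q : ℕ) (u : PowerSeries (ZMod p)) : Prop :=
  PowerSeries.coeff 1 u = 1 ∧
  ∀ m : ℕ, m ≠ 1 → (¬ ∃ k, 1 ≤ k ∧ m = q * k + 1) → PowerSeries.coeff m u = 0

open PowerSeries Finset FesAux

theorem stmt_10 (p r : ℕ) (hp : p.Prime) (hpodd : Odd p) (hr : 1 ≤ r) (q : ℕ) (hq : q = p ^ r)
    (i j i₀ s : ℕ) (hj : 1 ≤ j) (hi : i = i₀ * p ^ s) (hi₀ : ¬ p ∣ i₀)
    -- the hypothesis i > j·(q p^{n(i)} - 1)/(q - 1), cleared of the denominator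
    (hbig : (q - 1) * i > j * (q * p ^ s - 1))
    (a b : ZMod p) (hab : a * b ≠ 0)
    (u v : PowerSeries (ZMod p))
    -- u = t + u_{qi+1} t^{qi+1} exactly
    (hu1 : PowerSeries.coeff 1 u = 1)
    (hua : PowerSeries.coeff (q * i + 1) u = a)
    (hurest : ∀ m, m ≠ 1 → m ≠ q * i + 1 → PowerSeries.coeff m u = 0)
    -- v = t + v_{qj+1} t^{qj+1} + … ∈ T(q)
    (hv : InT p q v)
    (hvb : PowerSeries.coeff (q * j + 1) v = b)
    (hvlow : ∀ m, 1 < m → m < q * j + 1 → PowerSeries.coeff m v = 0)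
    -- u', v' are the compositional inverses of u, v
    (u' v' : PowerSeries (ZMod p))
    (hu' : psComp u u' = PowerSeries.X ∧ psComp u' u = PowerSeries.X)
    (hv' : psComp v v' = PowerSeries.X ∧ psComp v' v = PowerSeries.X) :
    -- [u,v] = t + i₀ u_{qi+1} v_{qj+1} t^{1+q(q p^s j + i)} + (higher order terms)
    let w := psComp (psComp (psComp u' v') u) v
    PowerSeries.constantCoeff w = 0 ∧
    PowerSeries.coeff 1 w = 1 ∧
    (∀ m, 1 < m → m < 1 + q * (q * p ^ s * j + i) → PowerSeries.coeff m w = 0) ∧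
    PowerSeries.coeff (1 + q * (q * p ^ s * j + i)) w = (i₀ : ZMod p) * a * b := by
  intro w
  haveI : Fact p.Prime := ⟨hp⟩
  set M := q * i + 1 with hMdef
  set P₀ := q * p ^ s with hP₀def
  set N := 1 + q * (P₀ * j + i) with hNdef
  -- numeric facts
  have hp3 : 3 ≤ p := by
    have h1 := hp.two_le
    have h2 := Nat.odd_iff.1 hpodd
    omega
  have hps1 : 1 ≤ p ^ s := Nat.one_le_pow _ _ (by omega)
  have hq3 : 3 ≤ q := by
    have : p ≤ p ^ r := Nat.le_self_pow (by omega) p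
    omega
  have hi1 : 1 ≤ i := by
    rcases Nat.eq_zero_or_pos i with hzero | hpos
    · rw [hzero, Nat.mul_zero] at hbig
      exact absurd hbig (by simp)
    · exact hpos
  have hqR : ((q : ℕ) : ZMod p) = 0 := by
    rw [hq]
    push_cast
    rw [ZMod.natCast_self]
    exact zero_pow (by omega)
  have hP₀eq : P₀ = p ^ (r + s) := by rw [hP₀def, hq, pow_add]
  have hP₀3 : 3 ≤ P₀ := by
    have : 3 * 1 ≤ q * p ^ s := Nat.mul_le_mul (by omega) hps1
    omega
  have hMP : M = 1 + i₀ * P₀ := by rw [hMdef, hP₀def, hi]; ring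
  have hNM : N = M + q * P₀ * j := by rw [hNdef, hMdef]; ring
  have hqP0j : 1 ≤ q * P₀ * j := by
    have : 1 * 1 * 1 ≤ q * P₀ * j := by
      apply Nat.mul_le_mul (Nat.mul_le_mul (by omega) (by omega)) hj
    omega
  have hM4 : 4 ≤ M := by
    have : 3 * 1 ≤ q * i := Nat.mul_le_mul (by omega) hi1
    omega
  have hMN : M < N := by omega
  have hP₀M : P₀ ≤ M := by
    have hi₀1 : 1 ≤ i₀ := by
      rcases Nat.eq_zero_or_pos i₀ with hzero | hpos
      · rw [hzero] at hi; simp at hi; omega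
      · exact hpos
    have : 1 * P₀ ≤ i₀ * P₀ := Nat.mul_le_mul hi₀1 (le_refl _)
    omega
  -- coefficients of v and vh
  have hv1 : coeff 1 v = 1 := hv.1
  have hv00 : coeff 0 v = 0 := by
    apply hv.2 0 (by omega)
    rintro ⟨k, hk, hcon⟩
    have h5 : 1 * 1 ≤ q * k := Nat.mul_le_mul (by omega) hk
    omega
  have hcv0 : constantCoeff v = 0 := by
    rw [← coeff_zero_eq_constantCoeff]; exact hv00
  have hu00 : coeff 0 u = 0 := hurest 0 (by omega) (by omega)
  have hcu0 : constantCoeff u = 0 := by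
    rw [← coeff_zero_eq_constantCoeff]; exact hu00
  set vh : PowerSeries (ZMod p) := v - X with hvhdef
  have hhc : ∀ m, coeff m vh = coeff m v - (if m = 1 then 1 else 0) := by
    intro m
    rw [hvhdef, map_sub, PowerSeries.coeff_X]
  have hh1 : coeff 1 vh = 0 := by rw [hhc 1, hv1]; simp
  have hhlow : ∀ m, m < q * j + 1 → coeff m vh = 0 := by
    intro m hm
    rcases Nat.lt_or_ge m 2 with h2 | h2
    · interval_cases m
      · rw [hhc 0, hv00]; simp
      · exact hh1
    · rw [hhc m, hvlow m (by omega) hm, if_neg (by omega), sub_zero]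
  have hhb : coeff (q * j + 1) vh = b := by
    have : 3 * 1 ≤ q * j := Nat.mul_le_mul (by omega) hj
    rw [hhc, hvb, if_neg (by omega), sub_zero]
  have hvsupp : ∀ k, coeff k v ≠ 0 → k = 1 ∨ ∃ t, j ≤ t ∧ k = q * t + 1 := by
    intro k hk
    by_cases hk1 : k = 1
    · exact Or.inl hk1
    right
    by_cases hex : ∃ t, 1 ≤ t ∧ k = q * t + 1
    · obtain ⟨t, ht1, rfl⟩ := hex
      refine ⟨t, ?_, rfl⟩
      by_contra htj
      have h3 : 3 * 1 ≤ q * t := Nat.mul_le_mul (by omega) ht1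
      have h4 : q * (t + 1) ≤ q * j := Nat.mul_le_mul (le_refl q) (by omega)
      rw [Nat.mul_succ] at h4
      exact hk (hvlow _ (by omega) (by omega))
    · exact absurd (hv.2 k hk1 hex) hk
  -- the casts of binomial coefficients we need
  have hbq : ∀ t m : ℕ, 2 ≤ m % q → (((q * t + 1).choose m : ℕ) : ZMod p) = 0 := by
    intro t m hm
    have e : q * t + 1 = 1 + t * p ^ r := by rw [← hq]; ring
    have h1 : ¬ p ^ r ∣ m := by
      rw [← hq]
      rintro ⟨c, hc⟩
      rw [hc, Nat.mul_mod_right] at hm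
      omega
    have h2 : ¬ (1 ≤ m ∧ p ^ r ∣ (m - 1)) := by
      rw [← hq]
      rintro ⟨hm1, c, hc⟩
      have hmc : m = q * c + 1 := by omega
      rw [hmc, Nat.mul_add_mod, Nat.mod_eq_of_lt (by omega)] at hm
      omega
    rw [e, choose_cast_eq p hp r t m (by rw [← hq]; omega), if_neg h1, if_neg h2, add_zero]
  have hbM0 : ∀ m : ℕ, 2 ≤ m → m < P₀ → ((M.choose m : ℕ) : ZMod p) = 0 := by
    intro m hm2 hmP
    have h1 : ¬ p ^ (r + s) ∣ m := by
      rw [← hP₀eq]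
      intro hd
      have := Nat.le_of_dvd (by omega) hd
      omega
    have h2 : ¬ (1 ≤ m ∧ p ^ (r + s) ∣ (m - 1)) := by
      rw [← hP₀eq]
      rintro ⟨hm1, hd⟩
      have := Nat.le_of_dvd (by omega) hd
      omega
    rw [hMP, hP₀eq, choose_cast_eq p hp (r + s) i₀ m (by rw [← hP₀eq]; omega),
      if_neg h1, if_neg h2, add_zero]
  have hbMP : ((M.choose P₀ : ℕ) : ZMod p) = (i₀ : ZMod p) := by
    have hQ3 : 3 ≤ p ^ (r + s) := hP₀eq ▸ hP₀3
    have h2 : ¬ (1 ≤ p ^ (r + s) ∧ p ^ (r + s) ∣ (p ^ (r + s) - 1)) := by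
      rintro ⟨hm1, hd⟩
      have := Nat.le_of_dvd (by omega) hd
      omega
    rw [hMP, hP₀eq, choose_cast_eq p hp (r + s) i₀ _ (by omega),
      if_pos (dvd_refl _), if_neg h2, add_zero, Nat.div_self (by omega),
      Nat.choose_one_right]
  -- coefficient computations
  have huX : ∀ k, coeff k u = (if k = 1 then 1 else 0) + (if k = M then a else 0) := by
    intro k
    by_cases hk1 : k = 1
    · rw [hk1, if_pos rfl, if_neg (by omega), add_zero]
      exact hu1
    by_cases hkM : k = M
    · rw [hkM, if_neg (by omega), if_pos rfl, zero_add]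
      exact hua
    · rw [if_neg hk1, if_neg hkM, add_zero]
      exact hurest k hk1 hkM
  have hA : ∀ n, coeff n (psComp u v)
      = coeff n v + a * coeff n (v ^ M) := by
    intro n
    rw [coeff_psComp]
    have hterm : ∀ k ∈ range (n+1), coeff k u * coeff n (v ^ k)
        = (if k = 1 then coeff n (v ^ k) else 0)
          + (if k = M then a * coeff n (v ^ k) else 0) := by
      intro k _
      rw [huX k, add_mul]
      congr 1
      · split_ifs <;> simp
      · split_ifs <;> simp
    rw [Finset.sum_congr rfl hterm, Finset.sum_add_distrib,
      Finset.sum_ite_eq' (range (n+1)) 1 (fun k => coeff n (v ^ k)),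
      Finset.sum_ite_eq' (range (n+1)) M (fun k => a * coeff n (v ^ k))]
    congr 1
    · by_cases hn : n = 0
      · rw [if_neg (by rw [Finset.mem_range]; omega), hn, hv00]
      · rw [if_pos (by rw [Finset.mem_range]; omega), pow_one]
    · by_cases hn : M ≤ n
      · rw [if_pos (by rw [Finset.mem_range]; omega)]
      · rw [if_neg (by rw [Finset.mem_range]; omega),
          coeff_pow_ord1 hcv0 (by omega : n < M), mul_zero]
  have hfrob : ∀ (x : ZMod p) (e : ℕ), x ^ p ^ e = x := by
    intro x e
    induction e with
    | zero => simp
    | succ e ih => rw [pow_succ, pow_mul, ih, ZMod.pow_card]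
  have hbP : b ^ P₀ = b := by rw [hP₀eq, hfrob]
  have hMcast : ((M : ℕ) : ZMod p) = 1 := by
    rw [hMdef]
    push_cast
    rw [hqR]
    ring
  have hvM : ∀ n, n ≤ N → coeff n (v ^ M)
      = (if n = M then 1 else 0) + coeff (n - (M - 1)) vh
        + (if n = N then (i₀ : ZMod p) * b else 0) := by
    intro n hn
    have hveq : v = vh + X := by rw [hvhdef]; ring
    rw [hveq, add_pow, map_sum]
    have hterm : ∀ m ∈ range (M + 1),
        coeff n (vh ^ m * X ^ (M - m) * ((M.choose m : ℕ) : PowerSeries (ZMod p)))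
          = (if m = 0 then (if n = M then 1 else 0) else 0)
            + (if m = 1 then coeff (n - (M - 1)) vh else 0)
            + (if m = P₀ then (if n = N then (i₀ : ZMod p) * b else 0) else 0) := by
      intro m hmr
      rw [Finset.mem_range] at hmr
      have hcast : ((M.choose m : ℕ) : PowerSeries (ZMod p))
          = C ((M.choose m : ℕ) : ZMod p) := by
        rw [← map_natCast (C (R := ZMod p))]
      rw [hcast, PowerSeries.coeff_mul_C, PowerSeries.coeff_mul_X_pow']
      by_cases hm0 : m = 0
      · subst hm0
        rw [if_neg (show ¬ (0:ℕ) = 1 by omega), if_neg (show ¬ (0:ℕ) = P₀ by omega),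
          if_pos (rfl : (0:ℕ) = 0), add_zero, add_zero]
        rw [Nat.choose_zero_right, Nat.cast_one, mul_one, Nat.sub_zero, pow_zero]
        by_cases hMn : M ≤ n
        · rw [if_pos hMn, PowerSeries.coeff_one]
          split_ifs <;> first | rfl | omega
        · rw [if_neg hMn, if_neg (show ¬ n = M by omega)]
      by_cases hm1 : m = 1
      · subst hm1
        rw [if_neg (show ¬ (1:ℕ) = 0 by omega), if_pos (rfl : (1:ℕ) = 1),
          if_neg (show ¬ (1:ℕ) = P₀ by omega), zero_add, add_zero]
        rw [Nat.choose_one_right, hMcast, mul_one, pow_one]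
        by_cases hMn : M - 1 ≤ n
        · rw [if_pos hMn]
        · rw [if_neg hMn]
          have : n - (M - 1) = 0 := by omega
          rw [this, hhlow 0 (by omega)]
      rw [if_neg hm0, if_neg hm1, zero_add, zero_add]
      by_cases hmP : m = P₀
      · subst hmP
        rw [if_pos (rfl : P₀ = P₀), hbMP]
        by_cases hnN : n = N
        · subst hnN
          have e1 : P₀ * (q * j + 1) = q * P₀ * j + P₀ := by ring
          rw [if_pos (show M - P₀ ≤ N by omega), if_pos (rfl : N = N)]
          have e2 : N - (M - P₀) = P₀ * (q * j + 1) := by omega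
          rw [e2, coeff_pow_lead hhlow P₀, hhb, hbP]
          ring
        · rw [if_neg hnN]
          have e1 : P₀ * (q * j + 1) = q * P₀ * j + P₀ := by ring
          by_cases hMn : M - P₀ ≤ n
          · rw [if_pos hMn, coeff_pow_eq_zero hhlow (by omega), zero_mul]
          · rw [if_neg hMn, zero_mul]
      · rw [if_neg hmP]
        rcases Nat.lt_or_ge m P₀ with hmlt | hmgt
        · rw [hbM0 m (by omega) hmlt, mul_zero]
        · have hmgt' : P₀ < m := by omega
          have h3 : q * (P₀ + 1) * j ≤ q * m * j :=
            Nat.mul_le_mul (Nat.mul_le_mul (le_refl q) (by omega)) (le_refl j)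
          have h4 : q * (P₀ + 1) * j = q * P₀ * j + q * j := by ring
          have h5 : 1 * 1 ≤ q * j := Nat.mul_le_mul (by omega) hj
          have e2 : m * (q * j + 1) = q * m * j + m := by ring
          by_cases hMn : M - m ≤ n
          · rw [if_pos hMn, coeff_pow_eq_zero hhlow (by omega), zero_mul]
          · rw [if_neg hMn, zero_mul]
    rw [Finset.sum_congr rfl hterm, Finset.sum_add_distrib, Finset.sum_add_distrib,
      Finset.sum_ite_eq' (range (M + 1)) 0
        (fun m => if n = M then (1 : ZMod p) else 0),
      Finset.sum_ite_eq' (range (M + 1)) 1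
        (fun m => coeff (n - (M - 1)) vh),
      Finset.sum_ite_eq' (range (M + 1)) P₀
        (fun m => if n = N then (i₀ : ZMod p) * b else 0),
      if_pos (Finset.mem_range.2 (by omega)), if_pos (Finset.mem_range.2 (by omega)),
      if_pos (Finset.mem_range.2 (by omega))]
  have huXeq : u = C a * X ^ M + X := by
    ext k
    rw [huX k, map_add, PowerSeries.coeff_C_mul, PowerSeries.coeff_X_pow,
      PowerSeries.coeff_X, mul_ite, mul_one, mul_zero, add_comm]
  have hupow : ∀ (k n' : ℕ), coeff n' (u ^ k)
      = ∑ m ∈ range (k + 1), ((k.choose m : ℕ) : ZMod p) * a ^ m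
          * (if n' = k + m * (q * i) then 1 else 0) := by
    intro k n'
    rw [huXeq, add_pow, map_sum]
    refine Finset.sum_congr rfl fun m hm => ?_
    rw [Finset.mem_range] at hm
    have hcast : ((k.choose m : ℕ) : PowerSeries (ZMod p))
        = C ((k.choose m : ℕ) : ZMod p) := by
      rw [← map_natCast (C (R := ZMod p))]
    rw [mul_pow, ← map_pow, ← pow_mul, hcast, PowerSeries.coeff_mul_C,
      PowerSeries.coeff_mul_X_pow', PowerSeries.coeff_C_mul, PowerSeries.coeff_X_pow]
    have e0 : M * m = m * (q * i) + m := by rw [hMdef]; ring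
    by_cases hc1 : n' = k + m * (q * i)
    · rw [if_pos (show k - m ≤ n' by omega), if_pos (show n' - (k - m) = M * m by omega),
        if_pos hc1]
      ring
    · by_cases hc2 : k - m ≤ n'
      · rw [if_pos hc2, if_neg (show ¬ n' - (k - m) = M * m by omega), if_neg hc1]
        ring
      · rw [if_neg hc2, if_neg hc1]
        ring
  have hB : ∀ n, n ≤ N → coeff n (psComp v u)
      = coeff n v
        + a * ((if n = M then 1 else 0) + coeff (n - (M - 1)) vh) := by
    intro n hn
    rw [coeff_psComp]
    have hterm : ∀ k ∈ range (n + 1), coeff k v * coeff n (u ^ k)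
        = (if k = n then coeff n v else 0)
          + (if 1 ≤ k ∧ n = k + q * i then coeff k v * a else 0) := by
      intro k hkr
      rw [Finset.mem_range] at hkr
      rw [hupow k n, Finset.mul_sum]
      have hinner : ∀ m ∈ range (k + 1),
          coeff k v * (((k.choose m : ℕ) : ZMod p) * a ^ m
            * (if n = k + m * (q * i) then 1 else 0))
          = (if m = 0 then (if k = n then coeff n v else 0) else 0)
            + (if m = 1 then (if n = k + q * i then coeff k v * a else 0) else 0) := by
        intro m hmr
        rw [Finset.mem_range] at hmr
        by_cases hm0 : m = 0
        · subst hm0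
          rw [if_pos (rfl : (0:ℕ) = 0), if_neg (show ¬ (0:ℕ) = 1 by omega), add_zero]
          rw [Nat.choose_zero_right, Nat.cast_one, pow_zero, Nat.zero_mul, Nat.add_zero]
          by_cases hkn : k = n
          · rw [if_pos (show n = k by omega), if_pos hkn]
            subst hkn
            ring
          · rw [if_neg (show ¬ n = k by omega), if_neg hkn]
            ring
        by_cases hm1 : m = 1
        · subst hm1
          rw [if_neg (show ¬ (1:ℕ) = 0 by omega), if_pos (rfl : (1:ℕ) = 1), zero_add]
          rw [Nat.choose_one_right, pow_one, Nat.one_mul]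
          by_cases hind : n = k + q * i
          · rw [if_pos hind, if_pos hind]
            by_cases hvk : coeff k v = 0
            · rw [hvk]
              ring
            · rcases hvsupp k hvk with hk1 | ⟨t, htj, rfl⟩
              · subst hk1
                rw [Nat.cast_one]
                ring
              · have hc : (((q * t + 1 : ℕ)) : ZMod p) = 1 := by
                  push_cast
                  rw [hqR]
                  ring
                rw [hc]
                ring
          · rw [if_neg hind, if_neg hind]
            ring
        · rw [if_neg hm0, if_neg hm1, add_zero]
          by_cases hind : n = k + m * (q * i)
          · by_cases hvk : coeff k v = 0
            · rw [hvk]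
              ring
            · rcases hvsupp k hvk with hk1 | ⟨t, htj, rfl⟩
              · subst hk1
                rw [Nat.choose_eq_zero_of_lt (by omega), Nat.cast_zero]
                ring
              · by_cases hmod : 2 ≤ m % q
                · rw [hbq t m hmod]
                  ring
                · exfalso
                  have hdiv := Nat.div_add_mod m q
                  have hmq : q ≤ m := by
                    rcases Nat.eq_zero_or_pos (m / q) with hz | hpos
                    · rw [hz, Nat.mul_zero] at hdiv
                      omega
                    · have : q * 1 ≤ q * (m / q) := Nat.mul_le_mul (le_refl q) hpos
                      omega
                  have c1 : q * (q * i) ≤ m * (q * i) :=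
                    Nat.mul_le_mul_right (q * i) hmq
                  have e3 : (q - 1) * i + 1 * i = ((q - 1) + 1) * i := (Nat.add_mul _ _ _).symm
                  have e4 : (q - 1) + 1 = q := by omega
                  rw [e4] at e3
                  have e5 : j * ((P₀ - 1) + 1) = j * (P₀ - 1) + j * 1 := Nat.mul_add _ _ _
                  have e5' : (P₀ - 1) + 1 = P₀ := by omega
                  rw [e5'] at e5
                  have e6 : j * P₀ = P₀ * j := Nat.mul_comm _ _
                  have e7 : q * (P₀ * j + i) = q * (P₀ * j) + q * i := Nat.mul_add _ _ _
                  have e8 : q * (t + q * i) = q * t + q * (q * i) := Nat.mul_add _ _ _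
                  have c4 : q * (t + q * i) ≤ q * (P₀ * j + i) := by omega
                  have c5 : t + q * i ≤ P₀ * j + i := Nat.le_of_mul_le_mul_left c4 (by omega)
                  omega
          · rw [if_neg hind]
            ring
      rw [Finset.sum_congr rfl hinner, Finset.sum_add_distrib,
        Finset.sum_ite_eq' (range (k + 1)) 0
          (fun m => if k = n then coeff n v else 0),
        Finset.sum_ite_eq' (range (k + 1)) 1
          (fun m => if n = k + q * i then coeff k v * a else 0),
        if_pos (Finset.mem_range.2 (by omega))]
      congr 1
      by_cases hk1 : 1 ≤ k
      · rw [if_pos (Finset.mem_range.2 (by omega))]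
        by_cases hind : n = k + q * i
        · rw [if_pos hind, if_pos ⟨hk1, hind⟩]
        · rw [if_neg hind, if_neg (by tauto)]
      · rw [if_neg (by rw [Finset.mem_range]; omega), if_neg (by omega)]
    rw [Finset.sum_congr rfl hterm, Finset.sum_add_distrib,
      Finset.sum_ite_eq' (range (n + 1)) n (fun k => coeff n v),
      if_pos (Finset.mem_range.2 (by omega))]
    congr 1
    by_cases hMn : M ≤ n
    · rw [Finset.sum_eq_single_of_mem (n - q * i) (Finset.mem_range.2 (by omega))]
      · rw [if_pos ⟨by omega, by omega⟩]
        by_cases hnM : n = M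
        · have e1 : n - q * i = 1 := by omega
          have e2 : n - (M - 1) = 1 := by omega
          rw [e1, e2, hv1, hh1, if_pos hnM]
          ring
        · have e2 : n - (M - 1) = n - q * i := by omega
          rw [e2, hhc (n - q * i), if_neg hnM,
            if_neg (show ¬ n - q * i = 1 by omega)]
          ring
      · intro k hkr hkne
        rw [Finset.mem_range] at hkr
        rw [if_neg (by rintro ⟨h1, h2⟩; exact hkne (by omega))]
    · rw [Finset.sum_eq_zero (fun k hkr => by
        rw [if_neg (by rintro ⟨h1, h2⟩; omega)])]
      have e2 : n - (M - 1) = 0 := by omega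
      rw [e2, hhlow 0 (by omega), if_neg (show ¬ n = M by omega)]
      ring
  have hdiff : ∀ n, n ≤ N → coeff n (psComp u v) - coeff n (psComp v u)
      = if n = N then (i₀ : ZMod p) * a * b else 0 := by
    intro n hn
    rw [hA n, hvM n hn, hB n hn]
    split_ifs <;> ring
  -- the composition equation
  have hcu' : constantCoeff u' = 0 := by
    have := congrArg (constantCoeff) hu'.2
    rwa [constantCoeff_psComp, constantCoeff_X] at this
  have hcv' : constantCoeff v' = 0 := by
    have := congrArg (constantCoeff) hv'.2
    rwa [constantCoeff_psComp, constantCoeff_X] at this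
  have hcuv : constantCoeff (psComp u v) = 0 := by
    rw [constantCoeff_psComp]; exact hcu0
  have hZ0 : constantCoeff (psComp v' (psComp u v)) = 0 := by
    rw [constantCoeff_psComp]; exact hcv'
  have hw_def : w = psComp u' (psComp v' (psComp u v)) := by
    show psComp (psComp (psComp u' v') u) v = _
    rw [psComp_assoc _ _ _ hcu0 hcv0, psComp_assoc _ _ _ hcv' hcuv]
  have hw0c : constantCoeff w = 0 := by
    rw [hw_def, constantCoeff_psComp]
    exact hcu'
  have hw_eq : psComp (psComp v u) w = psComp u v := by
    rw [hw_def]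
    rw [psComp_assoc v u _ hcu0 (by rw [constantCoeff_psComp]; exact hcu')]
    rw [← psComp_assoc u u' _ hcu' hZ0, hu'.1, psComp_X_left _ hZ0]
    rw [← psComp_assoc v v' _ hcv' hcuv, hv'.1, psComp_X_left _ hcuv]
  -- coefficient 1 facts
  have hcoeff1 : ∀ f g : PowerSeries (ZMod p),
      coeff 1 (psComp f g) = coeff 1 f * coeff 1 g := by
    intro f g
    rw [coeff_psComp]
    rw [Finset.sum_range_succ, Finset.sum_range_one]
    rw [pow_zero, PowerSeries.coeff_one, pow_one]
    simp
  have hg1 : coeff 1 (psComp v u) = 1 := by rw [hcoeff1, hv1, hu1]; ring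
  have hf1 : coeff 1 (psComp u v) = 1 := by rw [hcoeff1, hu1, hv1]; ring
  have hgv0 : constantCoeff (psComp v u) = 0 := by
    rw [constantCoeff_psComp]; exact hcv0
  -- the main induction
  have hw00 : coeff 0 w = 0 := by
    rw [coeff_zero_eq_constantCoeff]
    exact hw0c
  have hw1 : coeff 1 w = 1 := by
    have hcg := congrArg (coeff 1) hw_eq
    rw [hcoeff1, hg1, hf1, one_mul] at hcg
    exact hcg
  have hkey : ∀ n, n ≤ N → coeff n w
      = if n = 1 then 1 else if n = N then (i₀ : ZMod p) * a * b else 0 := by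
    intro n
    induction n using Nat.strong_induction_on with
    | _ n ih =>
      intro hn
      rcases Nat.lt_or_ge n 2 with hn2 | hn2
      · interval_cases n
        · rw [hw00, if_neg (by omega), if_neg (by omega)]
        · rw [hw1, if_pos rfl]
      · have ihmid : ∀ m, 0 < m → m < n → coeff m w = if m = 1 then 1 else 0 := by
          intro m hm0 hmn
          rw [ih m hmn (by omega)]
          split_ifs <;> first | rfl | omega
        have hpow := coeff_pow_nearX hn2 hw0c ihmid
        have hgw := congrArg (coeff n) hw_eq
        rw [coeff_psComp] at hgw
        have hterm : ∀ k ∈ range (n + 1),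
            coeff k (psComp v u) * coeff n (w ^ k)
            = (if k = n then coeff k (psComp v u) else 0)
              + (if k = 1 then coeff 1 (psComp v u) * coeff n w else 0) := by
          intro k hkr
          rw [hpow k n (le_refl n), if_neg (lt_irrefl n), mul_add]
          congr 1
          · split_ifs with hkn
            · rw [mul_one]
            · rw [mul_zero]
          · split_ifs with hk1
            · rw [hk1]
            · rw [mul_zero]
        rw [Finset.sum_congr rfl hterm, Finset.sum_add_distrib,
          Finset.sum_ite_eq' (range (n + 1)) n (fun k => coeff k (psComp v u)),
          Finset.sum_ite_eq' (range (n + 1)) 1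
            (fun k => coeff 1 (psComp v u) * coeff n w),
          if_pos (Finset.mem_range.2 (by omega)), if_pos (Finset.mem_range.2 (by omega)),
          hg1, one_mul] at hgw
        have hwn : coeff n w
            = coeff n (psComp u v) - coeff n (psComp v u) := by
          rw [← hgw]
          ring
        rw [hwn, hdiff n hn, if_neg (show ¬ n = 1 by omega)]
  refine ⟨hw0c, ?_, ?_, ?_⟩
  · rw [hkey 1 (by omega), if_pos rfl]
  · intro m h1m hmN
    rw [hkey m (by omega), if_neg (by omega), if_neg (by omega)]
  · rw [hkey N (le_refl N), if_neg (by omega), if_pos rfl]
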